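/- In a geodesic metric space, if every geodesic triangle is δ-slim (each side lies in the δ-neighborhood of the union of the other two sides), then for any four points a,b,c,d, the Gromov product satisfies (a,c)_b ≥ min((a,d)_b, (d,c)_b) − 8δ. -/
import Mathlib


open Set Metric

/-- `s` is (the image of) a geodesic segment from `a` to `b` in `X`. -/
def IsGeodesicSegment {X : Type*} [MetricSpace X] (a b : X) (s : Set X) : Prop :=
  ∃ f : ℝ → X, f 0 = a ∧ f (dist a b) = b ∧
    (∀ u ∈ Icc (0 : ℝ) (dist a b), ∀ v ∈ Icc (0 : ℝ) (dist a b),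
      dist (f u) (f v) = |u - v|) ∧
    s = f '' Icc (0 : ℝ) (dist a b)

/-- Distances from the endpoints to a point on a geodesic segment. -/
lemma dist_endpoints_of_mem {X : Type*} [MetricSpace X] {x y : X} {s : Set X}
    (hs : IsGeodesicSegment x y s) {m : X} (hm : m ∈ s) :
    ∃ t : ℝ, 0 ≤ t ∧ t ≤ dist x y ∧ dist x m = t ∧ dist y m = dist x y - t := by
  obtain ⟨f, h0, h1, hiso, rfl⟩ := hs
  obtain ⟨t, ht, rfl⟩ := hm
  refine ⟨t, ht.1, ht.2, ?_, ?_⟩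
  · rw [← h0, hiso 0 ⟨le_refl 0, dist_nonneg⟩ t ht, zero_sub, abs_neg, abs_of_nonneg ht.1]
  · have : dist (f (dist x y)) (f t) = |dist x y - t| :=
      hiso _ ⟨dist_nonneg, le_refl _⟩ t ht
    rw [h1] at this
    rw [this, abs_of_nonneg (by linarith [ht.2])]

/-- Any point on a geodesic from `x` to `y` is at distance at least `(x,y)_b` from `b`. -/
lemma gromov_le_dist_of_mem {X : Type*} [MetricSpace X] (b : X) {x y : X} {s : Set X}
    (hs : IsGeodesicSegment x y s) {m : X} (hm : m ∈ s) :
    (dist b x + dist b y - dist x y) / 2 ≤ dist b m := by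
  obtain ⟨t, ht0, ht1, hxm, hym⟩ := dist_endpoints_of_mem hs hm
  have h1 : dist b x ≤ dist b m + dist m x := dist_triangle b m x
  have h2 : dist b y ≤ dist b m + dist m y := dist_triangle b m y
  rw [dist_comm m x, hxm] at h1
  rw [dist_comm m y, hym] at h2
  linarith

/-- Under slimness, some point on a geodesic from `x` to `y` is at distance at most
`(x,y)_b + 2δ` from `b`. -/
lemma exists_mem_dist_le {X : Type*} [MetricSpace X] {δ : ℝ} (b x y : X)
    {sbx sby sxy : Set X}
    (hbx : IsGeodesicSegment b x sbx) (hby : IsGeodesicSegment b y sby)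
    (hxy : IsGeodesicSegment x y sxy)
    (hs : sxy ⊆ thickening δ (sbx ∪ sby)) :
    ∃ m ∈ sxy, dist b m ≤ (dist b x + dist b y - dist x y) / 2 + 2 * δ := by
  obtain ⟨f, h0, h1, hiso, hset⟩ := hxy
  have hxb : dist x b = dist b x := dist_comm x b
  have hyb : dist y b = dist b y := dist_comm y b
  set t : ℝ := (dist b x + dist x y - dist b y) / 2 with hT
  have ht0 : 0 ≤ t := by
    have h := dist_triangle b x y
    rw [hT]; linarith
  have ht1 : t ≤ dist x y := by
    have h := dist_triangle b y x
    rw [dist_comm y x] at h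
    rw [hT]; linarith
  have htmem : t ∈ Icc (0 : ℝ) (dist x y) := ⟨ht0, ht1⟩
  have hmmem : f t ∈ sxy := by rw [hset]; exact ⟨t, htmem, rfl⟩
  refine ⟨f t, hmmem, ?_⟩
  have hxm : dist x (f t) = t := by
    rw [← h0, hiso 0 ⟨le_refl 0, dist_nonneg⟩ t htmem, zero_sub, abs_neg, abs_of_nonneg ht0]
  have hym : dist y (f t) = dist x y - t := by
    have : dist (f (dist x y)) (f t) = |dist x y - t| :=
      hiso _ ⟨dist_nonneg, le_refl _⟩ t htmem
    rw [h1] at this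
    rw [this, abs_of_nonneg (by linarith)]
  obtain ⟨z, hz, hdz⟩ := mem_thickening_iff.mp (hs hmmem)
  rcases hz with hz | hz
  · -- z on the geodesic from b to x
    obtain ⟨u, hu0, hu1, hbz, hxz⟩ := dist_endpoints_of_mem hbx hz
    -- dist x (f t) ≤ dist x z + dist z (f t)
    have h1' : dist x (f t) ≤ dist x z + dist z (f t) := dist_triangle x z (f t)
    rw [hxm, hxz, dist_comm z (f t)] at h1'
    have h2' : dist b (f t) ≤ dist b z + dist z (f t) := dist_triangle b z (f t)
    rw [hbz, dist_comm z (f t)] at h2'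
    have hdz' : dist (f t) z ≤ δ := le_of_lt hdz
    rw [hT] at h1' h2' ⊢
    linarith
  · -- z on the geodesic from b to y
    obtain ⟨u, hu0, hu1, hbz, hyz⟩ := dist_endpoints_of_mem hby hz
    have h1' : dist y (f t) ≤ dist y z + dist z (f t) := dist_triangle y z (f t)
    rw [hym, hyz, dist_comm z (f t)] at h1'
    have h2' : dist b (f t) ≤ dist b z + dist z (f t) := dist_triangle b z (f t)
    rw [hbz, dist_comm z (f t)] at h2'
    have hdz' : dist (f t) z ≤ δ := le_of_lt hdz
    rw [hT] at h1' ⊢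
    linarith

theorem slim_triangles_imply_gromov_hyperbolic {X : Type*} [MetricSpace X] (δ : ℝ)
    (hδ : 0 < δ)
    (hgeod : ∀ a b : X, ∃ s : Set X, IsGeodesicSegment a b s)
    (hslim : ∀ (a b c : X) (sab sbc sac : Set X),
      IsGeodesicSegment a b sab → IsGeodesicSegment b c sbc → IsGeodesicSegment a c sac →
      sab ⊆ thickening δ (sbc ∪ sac) ∧ sbc ⊆ thickening δ (sab ∪ sac) ∧
        sac ⊆ thickening δ (sab ∪ sbc)) :
    ∀ a b c d : X,
      (dist b a + dist b c - dist a c) / 2 ≥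
        min ((dist b a + dist b d - dist a d) / 2)
            ((dist b d + dist b c - dist d c) / 2) - 8 * δ := by
  intro a b c d
  obtain ⟨sba, hba⟩ := hgeod b a
  obtain ⟨sbc, hbc⟩ := hgeod b c
  obtain ⟨sac, hac⟩ := hgeod a c
  obtain ⟨sad, had⟩ := hgeod a d
  obtain ⟨sdc, hdc⟩ := hgeod d c
  -- slimness of triangle b, a, c : sac ⊆ thickening δ (sba ∪ sbc)
  have hslim1 := (hslim b a c sba sac sbc hba hac hbc).2.1
  -- m on [a,c] with dist b m ≤ (a,c)_b + 2δ
  obtain ⟨m, hm, hbm⟩ := exists_mem_dist_le b a c hba hbc hac hslim1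
  -- slimness of triangle a, d, c : sac ⊆ thickening δ (sad ∪ sdc)
  have hslim2 := (hslim a d c sad sdc sac had hdc hac).2.2
  obtain ⟨w, hw, hdw⟩ := mem_thickening_iff.mp (hslim2 hm)
  have htri : dist b w ≤ dist b m + dist m w := dist_triangle b m w
  have hdw' : dist m w ≤ δ := le_of_lt hdw
  rcases hw with hw | hw
  · have hlow := gromov_le_dist_of_mem b had hw
    have hmin := min_le_left ((dist b a + dist b d - dist a d) / 2)
        ((dist b d + dist b c - dist d c) / 2)
    linarith
  · have hlow := gromov_le_dist_of_mem b hdc hw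
    have hmin := min_le_right ((dist b a + dist b d - dist a d) / 2)
        ((dist b d + dist b c - dist d c) / 2)
    linarith
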